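/- A polynomial P ∈ K⟨n⟩ satisfies δ_j P = 0 for all 1 ≤ j ≤ n if and only if P lies in the subspace Σ_{k=1}^n [X_k, K⟨n⟩] + K·1, i.e. P is the sum of a scalar and a finite sum of commutators of the form [X_k, Q] with Q ∈ K⟨n⟩. -/

import Mathlib

/-! Setup: the free associative algebra `K⟨X_1,…,X_n⟩` realized as the monoid
algebra of the free monoid on `Fin n`, together with the partial cyclic
derivatives `δ_j`, the number operator `N` and the cyclic symmetrization `C`. -/

noncomputable section

set_option linter.unusedSectionVars false

/-- `K⟨n⟩`, the ring of polynomials in `n` noncommuting indeterminates. -/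
abbrev FreePoly (K : Type) [CommSemiring K] (n : ℕ) : Type :=
  MonoidAlgebra K (FreeMonoid (Fin n))

/-- The monomial `X_{i_1} ⋯ X_{i_p}` associated to the word `w = [i_1,…,i_p]`. -/
def mono (K : Type) [Field K] {n : ℕ} (w : List (Fin n)) : FreePoly K n :=
  MonoidAlgebra.single (FreeMonoid.ofList w) 1

/-- The indeterminate `X k`. -/
def Xvar (K : Type) [Field K] {n : ℕ} (k : Fin n) : FreePoly K n := mono K [k]

variable {K : Type} [Field K] [CharZero K] {n : ℕ}

/-- The partial cyclic derivative `δ_j = μ̃ ∘ ∂_j`: on a monomial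
`X_{i_0} ⋯ X_{i_s}` it gives `∑_{p : i_p = j} X_{i_{p+1}} ⋯ X_{i_s} X_{i_0} ⋯ X_{i_{p-1}}`. -/
def cycDeriv (j : Fin n) : FreePoly K n →ₗ[K] FreePoly K n :=
  (Finsupp.lsum K fun w => LinearMap.toSpanSingleton K _
    (∑ p : Fin (FreeMonoid.toList w).length,
      if (FreeMonoid.toList w).get p = j then
        mono K ((FreeMonoid.toList w).drop (p + 1) ++ (FreeMonoid.toList w).take p)
      else 0)) ∘ₗ (MonoidAlgebra.coeffLinearEquiv K).toLinearMap

/-- The number operator `N`, multiplying a monomial by its degree. -/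
def numOp : FreePoly K n →ₗ[K] FreePoly K n :=
  (Finsupp.lsum K fun w => LinearMap.toSpanSingleton K _
    ((FreeMonoid.toList w).length • mono K (FreeMonoid.toList w))) ∘ₗ
    (MonoidAlgebra.coeffLinearEquiv K).toLinearMap

/-- The cyclic symmetrization `C`, sending a monomial of degree `p ≥ 1` to the
sum of its `p` cyclic rotations (and `1` to `0`). -/
def cycSym : FreePoly K n →ₗ[K] FreePoly K n :=
  (Finsupp.lsum K fun w => LinearMap.toSpanSingleton K _
    (∑ p ∈ Finset.range (FreeMonoid.toList w).length,
      mono K ((FreeMonoid.toList w).rotate (p + 1)))) ∘ₗ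
    (MonoidAlgebra.coeffLinearEquiv K).toLinearMap

/-! ### Auxiliary material -/

/-- Word-level cyclic derivative. -/
def Dlist (j : Fin n) (l : List (Fin n)) : FreePoly K n :=
  ∑ p : Fin l.length,
    if l.get p = j then mono K (l.drop (p + 1) ++ l.take p) else 0

lemma cycDeriv_single (j : Fin n) (w : FreeMonoid (Fin n)) (b : K) :
    cycDeriv j (MonoidAlgebra.single w b) = b • Dlist j (FreeMonoid.toList w) := by
  rw [cycDeriv, LinearMap.comp_apply]
  erw [Finsupp.lsum_single, LinearMap.toSpanSingleton_apply]
  rfl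

lemma cycSym_single (w : FreeMonoid (Fin n)) (b : K) :
    cycSym (MonoidAlgebra.single w b) = b • ∑ p ∈ Finset.range (FreeMonoid.toList w).length,
      mono K ((FreeMonoid.toList w).rotate (p + 1)) := by
  rw [cycSym, LinearMap.comp_apply]
  erw [Finsupp.lsum_single, LinearMap.toSpanSingleton_apply]

lemma numOp_single (w : FreeMonoid (Fin n)) (b : K) :
    numOp (MonoidAlgebra.single w b) =
      b • ((FreeMonoid.toList w).length • mono K (FreeMonoid.toList w)) := by
  rw [numOp, LinearMap.comp_apply]
  erw [Finsupp.lsum_single, LinearMap.toSpanSingleton_apply]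

lemma mono_def (l : List (Fin n)) :
    mono K l = MonoidAlgebra.single (FreeMonoid.ofList l) (1 : K) := rfl

lemma single_eq_smul_mono (w : FreeMonoid (Fin n)) (b : K) :
    (MonoidAlgebra.single w b : FreePoly K n) = b • mono K (FreeMonoid.toList w) := by
  rw [mono_def, FreeMonoid.ofList_toList, MonoidAlgebra.smul_single, smul_eq_mul, mul_one]

lemma Dlist_eq (j : Fin n) (l : List (Fin n)) :
    Dlist (K := K) j l = ∑ p ∈ Finset.range l.length,
      if l.getD p j = j then mono K (l.drop (p + 1) ++ l.take p) else 0 := by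
  rw [Dlist, ← Fin.sum_univ_eq_sum_range]
  refine Finset.sum_congr rfl fun p _ => ?_
  rw [List.get_eq_getElem, List.getD_eq_getElem l j p.isLt]

lemma Dlist_rot (j k : Fin n) (l : List (Fin n)) :
    Dlist (K := K) j (k :: l) = Dlist j (l ++ [k]) := by
  rw [Dlist_eq, Dlist_eq]
  have hlen : (l ++ [k]).length = l.length + 1 := by simp
  rw [hlen, List.length_cons, Finset.sum_range_succ', Finset.sum_range_succ]
  have h0 : (if (k :: l).getD 0 j = j then
      mono K ((k :: l).drop (0 + 1) ++ (k :: l).take 0) else 0) =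
      (if k = j then mono K l else 0) := by
    simp [List.getD]
  have hlast : (if (l ++ [k]).getD l.length j = j then
      mono K ((l ++ [k]).drop (l.length + 1) ++ (l ++ [k]).take l.length) else 0) =
      (if k = j then mono K l else 0) := by
    rw [List.getD_eq_getElem _ j (by simp), List.getElem_concat_length,
      List.take_left, List.drop_eq_nil_of_le (by simp), List.nil_append]
    rfl
  rw [h0, hlast, add_left_inj]
  refine Finset.sum_congr rfl fun p hp => ?_
  have hp' : p < l.length := Finset.mem_range.mp hp
  have h1 : (k :: l).getD (p + 1) j = (l ++ [k]).getD p j := by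
    rw [List.getD_cons_succ, List.getD_eq_getElem l j hp',
      List.getD_eq_getElem _ j (by simp [Nat.lt_succ_of_lt hp']),
      List.getElem_append_left hp']
  rw [h1]
  by_cases hc : (l ++ [k]).getD p j = j
  · rw [if_pos hc, if_pos hc]
    rw [List.drop_append_of_le_length (by omega), List.take_append_of_le_length (le_of_lt hp')]
    show mono K (l.drop (p + 1) ++ (k :: l.take p)) = mono K ((l.drop (p + 1) ++ [k]) ++ l.take p)
    rw [List.append_assoc, List.singleton_append]
  · rw [if_neg hc, if_neg hc]

lemma mono_cons (k : Fin n) (l : List (Fin n)) :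
    mono K (k :: l) = Xvar K k * mono K l := by
  rw [Xvar, mono, mono, mono, MonoidAlgebra.single_mul_single, one_mul,
    ← FreeMonoid.ofList_append, List.singleton_append]

lemma mono_concat (l : List (Fin n)) (k : Fin n) :
    mono K (l ++ [k]) = mono K l * Xvar K k := by
  rw [Xvar, mono, mono, mono, MonoidAlgebra.single_mul_single, one_mul,
    ← FreeMonoid.ofList_append]

lemma cycDeriv_mono (j : Fin n) (l : List (Fin n)) :
    cycDeriv j (mono K l) = Dlist j l := by
  rw [mono_def, cycDeriv_single, FreeMonoid.toList_ofList, one_smul]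

lemma cycDeriv_swap (j k : Fin n) (q : FreePoly K n) :
    cycDeriv j (Xvar K k * q) = cycDeriv j (q * Xvar K k) := by
  induction q using MonoidAlgebra.induction_linear with
  | zero => rw [mul_zero, zero_mul]
  | add f g hf hg => rw [mul_add, add_mul, map_add, map_add, hf, hg]
  | single w b =>
    rw [single_eq_smul_mono, mul_smul_comm, smul_mul_assoc, map_smul, map_smul,
      ← mono_cons, ← mono_concat, cycDeriv_mono, cycDeriv_mono, Dlist_rot]

lemma cycDeriv_one (j : Fin n) : cycDeriv j (1 : FreePoly K n) = 0 := by
  have : (1 : FreePoly K n) = MonoidAlgebra.single (1 : FreeMonoid (Fin n)) (1 : K) :=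
    MonoidAlgebra.one_def
  rw [this, cycDeriv_single]
  show (1 : K) • Dlist j [] = 0
  rw [Dlist]
  simp

lemma sum_rot (l : List (Fin n)) :
    ∑ p ∈ Finset.range l.length, mono K (l.rotate (p + 1)) =
      ∑ p ∈ Finset.range l.length, mono K (l.rotate p) := by
  cases l with
  | nil => simp
  | cons a t =>
    rw [List.length_cons, Finset.sum_range_succ,
      Finset.sum_range_succ' (fun p => mono K ((a :: t).rotate p))]
    congr 1
    rw [List.rotate_zero]
    have h : t.length + 1 = (a :: t).length := rfl
    rw [h, List.rotate_length]

lemma sum_X_cycDeriv (P : FreePoly K n) :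
    ∑ j : Fin n, Xvar K j * cycDeriv j P = cycSym P := by
  induction P using MonoidAlgebra.induction_linear with
  | zero => simp
  | add f g hf hg =>
    rw [map_add, ← hf, ← hg, ← Finset.sum_add_distrib]
    refine Finset.sum_congr rfl fun j _ => ?_
    rw [map_add, mul_add]
  | single w b =>
    rw [cycSym_single]
    have hstep : ∀ j : Fin n, Xvar K j * cycDeriv j (MonoidAlgebra.single w b)
        = b • (Xvar K j * Dlist j (FreeMonoid.toList w)) := fun j => by
      rw [cycDeriv_single, mul_smul_comm]
    simp only [hstep]
    rw [← Finset.smul_sum]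
    congr 1
    set l := FreeMonoid.toList w with hl
    have expand : ∀ j : Fin n, Xvar K j * Dlist j l =
        ∑ p ∈ Finset.range l.length,
          if l.getD p j = j then mono K (j :: (l.drop (p + 1) ++ l.take p)) else 0 := by
      intro j
      rw [Dlist_eq, Finset.mul_sum]
      refine Finset.sum_congr rfl fun p _ => ?_
      rw [mul_ite, mul_zero, ← mono_cons]
    simp only [expand]
    rw [Finset.sum_comm, sum_rot]
    refine Finset.sum_congr rfl fun p hp => ?_
    have hp' : p < l.length := Finset.mem_range.mp hp
    have hg : ∀ j : Fin n, l.getD p j = l[p] := fun j => List.getD_eq_getElem l j hp'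
    simp only [hg]
    rw [Finset.sum_ite_eq Finset.univ (l[p])
      (fun j => mono K (j :: (l.drop (p + 1) ++ l.take p))), if_pos (Finset.mem_univ _)]
    congr 1
    rw [List.rotate_eq_drop_append_take (le_of_lt hp'), List.drop_eq_getElem_cons hp']
    rfl

/-- `q ↦ X_k q - q X_k`. -/
def adX (k : Fin n) : FreePoly K n →ₗ[K] FreePoly K n :=
  LinearMap.mulLeft K (Xvar K k) - LinearMap.mulRight K (Xvar K k)

/-- `Q ↦ ∑ k [X_k, Q k]`. -/
def Tmap : (Fin n → FreePoly K n) →ₗ[K] FreePoly K n :=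
  ∑ k : Fin n, (adX k).comp (LinearMap.proj k)

lemma Tmap_apply (Q : Fin n → FreePoly K n) :
    Tmap Q = ∑ k : Fin n, (Xvar K k * Q k - Q k * Xvar K k) := by
  rw [Tmap, LinearMap.sum_apply]
  refine Finset.sum_congr rfl fun k _ => ?_
  simp [adX]

lemma adX_mem (k : Fin n) (q : FreePoly K n) :
    Xvar K k * q - q * Xvar K k ∈ LinearMap.range (Tmap (K := K) (n := n)) := by
  refine ⟨Pi.single k q, ?_⟩
  rw [Tmap_apply]
  have h : ∀ k' : Fin n, Xvar K k' * ((Pi.single k q : Fin n → FreePoly K n) k') -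
      ((Pi.single k q : Fin n → FreePoly K n) k') * Xvar K k' =
      if k' = k then Xvar K k * q - q * Xvar K k else 0 := by
    intro k'
    by_cases h : k' = k
    · subst h; simp [Pi.single_apply]
    · simp [Pi.single_apply, h]
  simp only [h]
  rw [Finset.sum_ite_eq' Finset.univ k (fun _ => Xvar K k * q - q * Xvar K k),
    if_pos (Finset.mem_univ _)]

lemma rot1_mem (l : List (Fin n)) :
    mono K l - mono K (l.rotate 1) ∈ LinearMap.range (Tmap (K := K) (n := n)) := by
  cases l with
  | nil => rw [List.rotate_nil, sub_self]; exact zero_mem _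
  | cons a t =>
    have h : (a :: t).rotate 1 = t ++ [a] := by
      rw [List.rotate_cons_succ, List.rotate_zero]
    rw [h, mono_cons, mono_concat]
    exact adX_mem a (mono K t)

lemma rotq_mem (q : ℕ) (l : List (Fin n)) :
    mono K l - mono K (l.rotate q) ∈ LinearMap.range (Tmap (K := K) (n := n)) := by
  induction q with
  | zero => rw [List.rotate_zero, sub_self]; exact zero_mem _
  | succ m ih =>
    have h2 := rot1_mem (K := K) (l.rotate m)
    rw [List.rotate_rotate] at h2
    have h3 := add_mem ih h2
    rwa [sub_add_sub_cancel] at h3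

lemma NC_mem (P : FreePoly K n) :
    numOp P - cycSym P ∈ LinearMap.range (Tmap (K := K) (n := n)) := by
  induction P using MonoidAlgebra.induction_linear with
  | zero => simp only [map_zero, sub_zero]; exact zero_mem _
  | add f g hf hg =>
    have h3 := add_mem hf hg
    rwa [show numOp f - cycSym f + (numOp g - cycSym g) =
      numOp (f + g) - cycSym (f + g) by rw [map_add, map_add]; abel] at h3
  | single w b =>
    rw [numOp_single, cycSym_single, ← smul_sub]
    refine Submodule.smul_mem _ b ?_
    set l := FreeMonoid.toList w
    have h : (l.length • mono K l : FreePoly K n) = ∑ p ∈ Finset.range l.length, mono K l := by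
      rw [Finset.sum_const, Finset.card_range]
    rw [h, ← Finset.sum_sub_distrib]
    exact Submodule.sum_mem _ fun p _ => rotq_mem (p + 1) l

/-- The inverse of the number operator (on words of positive length). -/
def Mop : FreePoly K n →ₗ[K] FreePoly K n :=
  (Finsupp.lsum K fun w => LinearMap.toSpanSingleton K _
    ((((FreeMonoid.toList w).length : K))⁻¹ • mono K (FreeMonoid.toList w))) ∘ₗ
    (MonoidAlgebra.coeffLinearEquiv K).toLinearMap

lemma Mop_single (w : FreeMonoid (Fin n)) (b : K) :
    Mop (MonoidAlgebra.single w b) =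
      b • ((((FreeMonoid.toList w).length : K))⁻¹ • mono K (FreeMonoid.toList w)) := by
  rw [Mop, LinearMap.comp_apply]
  erw [Finsupp.lsum_single, LinearMap.toSpanSingleton_apply]

lemma Mop_mono (l : List (Fin n)) :
    Mop (mono K l) = ((l.length : K))⁻¹ • mono K l := by
  rw [mono_def, Mop_single, FreeMonoid.toList_ofList, one_smul]
  rfl

/-- The "constant coefficient" functional. -/
def cEval : FreePoly K n →ₗ[K] K := Finsupp.lapply (1 : FreeMonoid (Fin n)) ∘ₗ
    (MonoidAlgebra.coeffLinearEquiv K).toLinearMap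

lemma Mop_numOp (P : FreePoly K n) :
    Mop (numOp P) = P - (cEval P) • 1 := by
  induction P using MonoidAlgebra.induction_linear with
  | zero => simp
  | add f g hf hg =>
    rw [map_add, map_add, hf, hg, map_add, add_smul]
    rw [sub_add_sub_comm]
  | single w b =>
    rw [numOp_single, map_smul, map_nsmul, Mop_mono]
    by_cases hw : w = 1
    · subst hw
      have hc : cEval (MonoidAlgebra.single (1 : FreeMonoid (Fin n)) b : FreePoly K n) = b := by
        rw [cEval, LinearMap.comp_apply]
        erw [Finsupp.lapply_apply]
        exact Finsupp.single_eq_same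
      rw [hc]
      have hnil : FreeMonoid.toList (1 : FreeMonoid (Fin n)) = [] := rfl
      rw [hnil, List.length_nil, zero_smul, smul_zero, single_eq_smul_mono, hnil]
      have h1 : (1 : FreePoly K n) = mono K [] := rfl
      rw [← h1, sub_self]
    · have hc : cEval (MonoidAlgebra.single w b : FreePoly K n) = 0 := by
        rw [cEval, LinearMap.comp_apply]
        erw [Finsupp.lapply_apply]
        exact Finsupp.single_eq_of_ne' fun h => hw h
      have hlnil : FreeMonoid.toList w ≠ [] := by
        intro h
        apply hw
        have h2 := FreeMonoid.ofList_toList w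
        rw [h] at h2
        exact h2.symm
      have hlen : ((FreeMonoid.toList w).length : K) ≠ 0 :=
        Nat.cast_ne_zero.mpr fun h => hlnil (List.length_eq_zero_iff.mp h)
      rw [hc, zero_smul, sub_zero,
        ← Nat.cast_smul_eq_nsmul K, smul_smul, smul_smul, mul_assoc,
        mul_inv_cancel₀ hlen, mul_one, ← single_eq_smul_mono]

lemma Mop_ad_mem (k : Fin n) (q : FreePoly K n) :
    Mop (Xvar K k * q - q * Xvar K k) ∈ LinearMap.range (Tmap (K := K) (n := n)) := by
  induction q using MonoidAlgebra.induction_linear with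
  | zero => simp only [mul_zero, zero_mul, sub_self, map_zero]; exact zero_mem _
  | add f g hf hg =>
    rw [mul_add, add_mul, add_sub_add_comm, map_add]
    exact add_mem hf hg
  | single w b =>
    rw [single_eq_smul_mono, mul_smul_comm, smul_mul_assoc, ← smul_sub, map_smul]
    refine Submodule.smul_mem _ b ?_
    rw [← mono_cons, ← mono_concat, map_sub, Mop_mono, Mop_mono]
    set l := FreeMonoid.toList w
    rw [show ((l ++ [k]).length : K) = ((k :: l).length : K) by simp, ← smul_sub,
      mono_cons, mono_concat]
    exact Submodule.smul_mem _ _ (adX_mem k (mono K l))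

lemma Mop_mem {x : FreePoly K n} (hx : x ∈ LinearMap.range (Tmap (K := K) (n := n))) :
    Mop x ∈ LinearMap.range (Tmap (K := K) (n := n)) := by
  obtain ⟨Q, rfl⟩ := hx
  rw [Tmap_apply, map_sum]
  exact Submodule.sum_mem _ fun k _ => Mop_ad_mem k (Q k)

theorem cycDeriv_eq_zero_iff_scalar_add_sum_commutators (P : FreePoly K n) :
    (∀ j : Fin n, cycDeriv j P = 0) ↔
      ∃ (c : K) (Q : Fin n → FreePoly K n),
        P = c • 1 + ∑ k : Fin n, (Xvar K k * Q k - Q k * Xvar K k) := by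
  constructor
  · intro h
    have hC : cycSym P = 0 := by
      rw [← sum_X_cycDeriv]
      simp [h]
    have h1 : numOp P ∈ LinearMap.range (Tmap (K := K) (n := n)) := by
      have h0 := NC_mem P
      rwa [hC, sub_zero] at h0
    have h2 : P - (cEval P) • 1 ∈ LinearMap.range (Tmap (K := K) (n := n)) := by
      rw [← Mop_numOp]
      exact Mop_mem h1
    obtain ⟨Q, hQ⟩ := h2
    refine ⟨cEval P, Q, ?_⟩
    rw [Tmap_apply] at hQ
    rw [hQ]
    abel
  · rintro ⟨c, Q, rfl⟩ j
    rw [map_add, map_smul, cycDeriv_one, smul_zero, map_sum, zero_add]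
    refine Finset.sum_eq_zero fun k _ => ?_
    rw [map_sub, cycDeriv_swap j k (Q k), sub_self]
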